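/- arXiv:0707.1766 — 5 statements merged into one kernel-verified Lean document; each statement's English description precedes it below -/
import Mathlib

section
/- Let E = (I, F, V) be a C₁-space over F_q. Then the ℂ-vector space of invariant measures on E (i.e., of translation-invariant ℂ-linear functionals on D(E)) is one-dimensional: it contains a nonzero element, and any two of its elements are ℂ-linearly dependent. -/
open scoped Classical

/-- A `C₁`-space over the field `Fq`: an `Fq`-vector space `V` together with a filtration
`F` indexed by a nonempty partially ordered set `I` which is directed in both directions,
such that `⋂ᵢ F(i) = 0`, `⋃ᵢ F(i) = V`, and all quotients `F(j)/F(i)` (`i ≤ j`) are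
finite-dimensional over `Fq`. -/
structure C1Space (Fq : Type) [Field Fq] (I : Type) [PartialOrder I]
    (V : Type) [AddCommGroup V] [Module Fq V] where
  F : I → Submodule Fq V
  nonempty : Nonempty I
  directed : ∀ i j : I, ∃ k l : I, k ≤ i ∧ i ≤ l ∧ k ≤ j ∧ j ≤ l
  mono : Monotone F
  inter_eq_bot : ∀ v : V, (∀ i : I, v ∈ F i) → v = 0
  union_eq_top : ∀ v : V, ∃ i : I, v ∈ F i
  finite_quot : ∀ i j : I, i ≤ j →
    FiniteDimensional Fq (↥(F j) ⧸ Submodule.comap (F j).subtype (F i))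

variable {Fq : Type} [Field Fq] {I : Type} [PartialOrder I]
  {V : Type} [AddCommGroup V] [Module Fq V]

/-- Membership in the Bruhat space `D(E)`: locally constant functions with compact support,
i.e. `f` vanishes outside some `F(j)` and is invariant under translations by some `F(i)`,
`i ≤ j`. -/
def MemD (E : C1Space Fq I V) (f : V → ℂ) : Prop :=
  ∃ i j : I, i ≤ j ∧ (∀ v : V, v ∉ E.F j → f v = 0) ∧
    (∀ w ∈ E.F i, ∀ v : V, f (v + w) = f v)

/-- The Bruhat space `D(E)` as a `ℂ`-subspace of the space of all functions `V → ℂ`. -/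
noncomputable def Dspace (E : C1Space Fq I V) : Submodule ℂ (V → ℂ) where
  carrier := {f | MemD E f}
  zero_mem' := by
    obtain ⟨i⟩ := E.nonempty
    exact ⟨i, i, le_rfl, fun v _ => rfl, fun w _ v => rfl⟩
  add_mem' := by
    rintro f g ⟨i₁, j₁, h₁, hz₁, hi₁⟩ ⟨i₂, j₂, h₂, hz₂, hi₂⟩
    obtain ⟨k, l₀, hk₁, -, hk₂, -⟩ := E.directed i₁ i₂
    obtain ⟨k₀, l, -, hl₁, -, hl₂⟩ := E.directed j₁ j₂
    refine ⟨k, l, le_trans hk₁ (le_trans h₁ hl₁), ?_, ?_⟩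
    · intro v hv
      have hv₁ : v ∉ E.F j₁ := fun h => hv (E.mono hl₁ h)
      have hv₂ : v ∉ E.F j₂ := fun h => hv (E.mono hl₂ h)
      show f v + g v = 0
      rw [hz₁ v hv₁, hz₂ v hv₂, add_zero]
    · intro w hw v
      show f (v + w) + g (v + w) = f v + g v
      rw [hi₁ w (E.mono hk₁ hw) v, hi₂ w (E.mono hk₂ hw) v]
  smul_mem' := by
    rintro c f ⟨i, j, hij, hz, hi⟩
    refine ⟨i, j, hij, ?_, ?_⟩
    · intro v hv
      show c * f v = 0
      rw [hz v hv, mul_zero]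
    · intro w hw v
      show c * f (v + w) = c * f v
      rw [hi w hw v]

theorem mem_Dspace {E : C1Space Fq I V} {f : V → ℂ} (h : MemD E f) : f ∈ Dspace E := h

/-- `D(E)` is stable under translations `T_a`. -/
theorem translate_mem (E : C1Space Fq I V) {f : V → ℂ} (hf : f ∈ Dspace E) (a : V) :
    (fun v => f (v + a)) ∈ Dspace E := by
  obtain ⟨i, j, hij, hz, hinv⟩ := hf
  obtain ⟨j', hj'⟩ := E.union_eq_top a
  obtain ⟨k₀, l, -, hl₁, -, hl₂⟩ := E.directed j j'
  refine ⟨i, l, le_trans hij hl₁, ?_, ?_⟩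
  · intro v hv
    show f (v + a) = 0
    apply hz
    intro hva
    apply hv
    have hsub : v + a - a ∈ E.F l := (E.F l).sub_mem (E.mono hl₁ hva) (E.mono hl₂ hj')
    simpa using hsub
  · intro w hw v
    show f (v + w + a) = f (v + a)
    rw [add_right_comm]
    exact hinv w hw (v + a)

/-- An invariant measure on `E` is a translation-invariant `ℂ`-linear functional on `D(E)`. -/
def IsInvariantMeasure (E : C1Space Fq I V) (μ : ↥(Dspace E) →ₗ[ℂ] ℂ) : Prop :=
  ∀ (a : V) (f : ↥(Dspace E)),
    μ ⟨fun v => (f : V → ℂ) (v + a), translate_mem E f.2 a⟩ = μ f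

/-- The indicator function of a filtration subspace `F(i)` lies in `D(E)`. -/
theorem indicator_mem (E : C1Space Fq I V) (i : I) :
    (fun v => if v ∈ E.F i then (1 : ℂ) else 0) ∈ Dspace E := by
  refine ⟨i, i, le_rfl, ?_, ?_⟩
  · intro v hv
    simp [hv]
  · intro w hw v
    show (if v + w ∈ E.F i then (1 : ℂ) else 0) = (if v ∈ E.F i then (1 : ℂ) else 0)
    by_cases h : v ∈ E.F i
    · simp [h, (E.F i).add_mem h hw]
    · have h2 : v + w ∉ E.F i := fun hvw => h (by simpa using (E.F i).sub_mem hvw hw)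
      simp [h, h2]

set_option linter.unusedSectionVars false

namespace Statement11Aux

variable (E : C1Space Fq I V)

/-- The quotient `F(j)/F(i)` (intersected with `F(j)`). -/
abbrev Qm (i j : I) : Type _ := ↥(E.F j) ⧸ Submodule.comap (E.F j).subtype (E.F i)

noncomputable def repS {i j : I} (x : Qm E i j) : ↥(E.F j) := Quotient.out x

lemma mk_repS {i j : I} (x : Qm E i j) : Submodule.Quotient.mk (repS E x) = x :=
  Quotient.out_eq x

lemma qm_eq {i j : I} {a b : ↥(E.F j)} :
    (Submodule.Quotient.mk a : Qm E i j) = Submodule.Quotient.mk b ↔ (a : V) - b ∈ E.F i := by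
  rw [Submodule.Quotient.eq]; rfl

lemma repS_sub {i j : I} (a : ↥(E.F j)) :
    ((repS E (Submodule.Quotient.mk a : Qm E i j) : V) - a) ∈ E.F i :=
  (qm_eq E).mp (mk_repS E _)

lemma inv_eq {i : I} {f : V → ℂ} (hinv : ∀ w ∈ E.F i, ∀ v, f (v + w) = f v)
    {a b : V} (h : a - b ∈ E.F i) : f a = f b := by
  have h2 := hinv (a - b) h b
  rw [show b + (a - b) = a from by abel] at h2
  exact h2

lemma ind_inv {i j : I} (hij : i ≤ j) :
    ∀ w ∈ E.F i, ∀ v : V, (if v + w ∈ E.F j then (1:ℂ) else 0) = (if v ∈ E.F j then (1:ℂ) else 0) := by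
  intro w hw v
  have hw' := E.mono hij hw
  by_cases h : v ∈ E.F j
  · simp [h, (E.F j).add_mem h hw']
  · have h2 : v + w ∉ E.F j := fun hvw => h (by simpa using (E.F j).sub_mem hvw hw')
    simp [h, h2]

lemma exists_lb (E : C1Space Fq I V) (i j : I) : ∃ k, k ≤ i ∧ k ≤ j := by
  obtain ⟨k, l, h1, -, h3, -⟩ := E.directed i j; exact ⟨k, h1, h3⟩

lemma exists_ub (E : C1Space Fq I V) (i j : I) : ∃ l, i ≤ l ∧ j ≤ l := by
  obtain ⟨k, l, -, h2, -, h4⟩ := E.directed i j; exact ⟨l, h2, h4⟩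

lemma memD {f : V → ℂ} (h : f ∈ Dspace E) : MemD E f := h

section Fin
variable [Fintype Fq]

lemma finiteQ {i j : I} (hij : i ≤ j) : Finite (Qm E i j) := by
  haveI := E.finite_quot i j hij
  exact Module.finite_of_finite Fq

noncomputable def nn (i j : I) : ℕ := Nat.card (Qm E i j)

lemma nn_pos {i j : I} (hij : i ≤ j) : 0 < nn E i j := by
  haveI := finiteQ E hij
  haveI : Nonempty (Qm E i j) := ⟨0⟩
  exact Nat.card_pos

lemma nn_ne_zero {i j : I} (hij : i ≤ j) : (nn E i j : ℂ) ≠ 0 := by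
  exact_mod_cast (nn_pos E hij).ne'

/-- The basic sum of `f` over representatives of `F(j)/F(i)`. -/
noncomputable def S (i j : I) (f : V → ℂ) : ℂ := ∑ᶠ x : Qm E i j, f (repS E x)

lemma S_refine {k i l : I} (hki : k ≤ i) (hil : i ≤ l) (f : V → ℂ)
    (hinv : ∀ w ∈ E.F i, ∀ v, f (v + w) = f v) :
    S E k l f = (nn E k i : ℂ) * S E i l f := by
  classical
  have hkl : k ≤ l := le_trans hki hil
  haveI := finiteQ E hkl
  haveI := finiteQ E hil
  haveI := finiteQ E hki
  haveI : Fintype (Qm E k l) := Fintype.ofFinite _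
  haveI : Fintype (Qm E i l) := Fintype.ofFinite _
  haveI : Fintype (Qm E k i) := Fintype.ofFinite _
  set π : Qm E k l → Qm E i l := fun x => Submodule.Quotient.mk (repS E x) with hπ
  have fib : ∀ y : Qm E i l, Fintype.card {x : Qm E k l // π x = y} = nn E k i := by
    intro y
    have hmem : ∀ z : Qm E k i, ((repS E z : V) + (repS E y : V)) ∈ E.F l :=
      fun z => add_mem (E.mono hil (repS E z).2) (repS E y).2
    let b : Qm E k i → ↥(E.F l) := fun z => ⟨(repS E z : V) + (repS E y : V), hmem z⟩
    let φ : Qm E k i → {x : Qm E k l // π x = y} := fun z =>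
      ⟨Submodule.Quotient.mk (b z), by
        show (Submodule.Quotient.mk (repS E (Submodule.Quotient.mk (b z) : Qm E k l)) : Qm E i l) = y
        conv_rhs => rw [← mk_repS E y]
        rw [qm_eq]
        have h1 : ((repS E (Submodule.Quotient.mk (b z) : Qm E k l) : V) - b z) ∈ E.F k :=
          repS_sub E (b z)
        have h2 := E.mono hki h1
        have h3 : ((repS E z : V)) ∈ E.F i := (repS E z).2
        have h4 := add_mem h2 h3
        have heq : ((repS E (Submodule.Quotient.mk (b z) : Qm E k l) : V) - b z) + (repS E z : V)
            = (repS E (Submodule.Quotient.mk (b z) : Qm E k l) : V) - (repS E y : V) := by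
          show _ - ((repS E z : V) + (repS E y : V)) + _ = _
          abel
        rwa [heq] at h4⟩
    have hinj : Function.Injective φ := by
      intro z z' h
      have h1 : (Submodule.Quotient.mk (b z) : Qm E k l) = Submodule.Quotient.mk (b z') :=
        congrArg Subtype.val h
      rw [qm_eq] at h1
      have h2 : ((repS E z : V) + (repS E y : V) - ((repS E z' : V) + (repS E y : V))) ∈ E.F k := h1
      have heq : ((repS E z : V) + (repS E y : V) - ((repS E z' : V) + (repS E y : V)))
          = (repS E z : V) - (repS E z' : V) := by abel
      rw [heq] at h2
      rw [← mk_repS E z, ← mk_repS E z', qm_eq]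
      exact h2
    have hsurj : Function.Surjective φ := by
      rintro ⟨x, hx⟩
      have hx' : ((repS E x : V) - (repS E y : V)) ∈ E.F i := by
        refine (qm_eq E).mp ?_
        rw [mk_repS E y]
        exact hx
      set d : ↥(E.F i) := ⟨(repS E x : V) - (repS E y : V), hx'⟩ with hd
      set z : Qm E k i := Submodule.Quotient.mk d with hz
      refine ⟨z, ?_⟩
      apply Subtype.ext
      show (Submodule.Quotient.mk (b z) : Qm E k l) = x
      conv_rhs => rw [← mk_repS E x]
      rw [qm_eq]
      have h1 : ((repS E z : V) - d) ∈ E.F k := repS_sub E d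
      have h2 : ((repS E z : V) - ((repS E x : V) - (repS E y : V))) ∈ E.F k := h1
      have heq : ((repS E z : V) - ((repS E x : V) - (repS E y : V)))
          = ((b z : V) - (repS E x : V)) := by
        show _ = ((repS E z : V) + (repS E y : V)) - _
        abel
      rwa [heq] at h2
    rw [← Nat.card_eq_fintype_card, ← Nat.card_congr (Equiv.ofBijective φ ⟨hinj, hsurj⟩), nn]
  have hfconst : ∀ (y : Qm E i l) (x : {x : Qm E k l // π x = y}),
      f ((repS E (x : Qm E k l) : V)) = f ((repS E y : V)) := by
    rintro y ⟨x, hx⟩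
    apply inv_eq E hinv
    have : (Submodule.Quotient.mk (repS E x) : Qm E i l) = Submodule.Quotient.mk (repS E y) := by
      rw [mk_repS E y]; exact hx
    exact (qm_eq E).mp this
  calc S E k l f = ∑ x : Qm E k l, f ((repS E x : V)) := finsum_eq_sum_of_fintype _
    _ = ∑ y : Qm E i l, ∑ x : {x : Qm E k l // π x = y}, f ((repS E (x : Qm E k l) : V)) :=
        (Fintype.sum_fiberwise π _).symm
    _ = ∑ y : Qm E i l, (nn E k i : ℂ) * f ((repS E y : V)) := by
        refine Finset.sum_congr rfl (fun y _ => ?_)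
        rw [Finset.sum_congr rfl (fun x _ => hfconst y x), Finset.sum_const, Finset.card_univ,
          fib y, nsmul_eq_mul]
    _ = (nn E k i : ℂ) * ∑ y : Qm E i l, f ((repS E y : V)) := by rw [← Finset.mul_sum]
    _ = (nn E k i : ℂ) * S E i l f := by rw [S, finsum_eq_sum_of_fintype]

lemma S_extend {i j l : I} (hij : i ≤ j) (hjl : j ≤ l) (f : V → ℂ)
    (hsupp : ∀ v ∉ E.F j, f v = 0)
    (hinv : ∀ w ∈ E.F i, ∀ v, f (v + w) = f v) :
    S E i j f = S E i l f := by
  classical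
  haveI := finiteQ E hij
  haveI := finiteQ E (le_trans hij hjl)
  haveI : Fintype (Qm E i j) := Fintype.ofFinite _
  haveI : Fintype (Qm E i l) := Fintype.ofFinite _
  set ι : Qm E i j → Qm E i l := fun z =>
    Submodule.Quotient.mk ⟨(repS E z : V), E.mono hjl (repS E z).2⟩ with hι
  have hinj : ∀ x ∈ Finset.univ, ∀ y ∈ Finset.univ, ι x = ι y → x = y := by
    intro z _ z' _ h
    rw [hι] at h
    simp only [qm_eq] at h
    rw [← mk_repS E z, ← mk_repS E z', qm_eq]
    exact h
  have hvanish : ∀ x ∈ (Finset.univ : Finset (Qm E i l)), x ∉ Finset.image ι Finset.univ →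
      f ((repS E x : V)) = 0 := by
    intro x _ hx
    apply hsupp
    intro hmem
    apply hx
    rw [Finset.mem_image]
    refine ⟨Submodule.Quotient.mk ⟨(repS E x : V), hmem⟩, Finset.mem_univ _, ?_⟩
    show (Submodule.Quotient.mk
      ⟨((repS E (Submodule.Quotient.mk ⟨(repS E x : V), hmem⟩ : Qm E i j)) : V), _⟩ : Qm E i l) = x
    conv_rhs => rw [← mk_repS E x]
    rw [qm_eq]
    exact repS_sub E (⟨(repS E x : V), hmem⟩ : ↥(E.F j))
  have hterm : ∀ z : Qm E i j, f ((repS E (ι z) : V)) = f ((repS E z : V)) := by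
    intro z
    apply inv_eq E hinv
    exact repS_sub E (⟨(repS E z : V), E.mono hjl (repS E z).2⟩ : ↥(E.F l))
  calc S E i j f = ∑ z : Qm E i j, f ((repS E z : V)) := finsum_eq_sum_of_fintype _
    _ = ∑ z : Qm E i j, f ((repS E (ι z) : V)) := by
        exact (Finset.sum_congr rfl (fun z _ => hterm z)).symm
    _ = ∑ x ∈ Finset.image ι Finset.univ, f ((repS E x : V)) :=
        (Finset.sum_image (f := fun x => f ((repS E x : V))) hinj).symm
    _ = ∑ x : Qm E i l, f ((repS E x : V)) :=
        Finset.sum_subset (Finset.subset_univ _) hvanish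
    _ = S E i l f := (finsum_eq_sum_of_fintype _).symm

lemma S_translate {i l : I} (hil : i ≤ l) (f : V → ℂ)
    (hinv : ∀ w ∈ E.F i, ∀ v, f (v + w) = f v) (a : V) (ha : a ∈ E.F l) :
    S E i l (fun v => f (v + a)) = S E i l f := by
  classical
  haveI := finiteQ E hil
  haveI : Fintype (Qm E i l) := Fintype.ofFinite _
  rw [S, S, finsum_eq_sum_of_fintype, finsum_eq_sum_of_fintype]
  have key : ∀ x : Qm E i l,
      f ((repS E x : V) + a) = f ((repS E (x + Submodule.Quotient.mk ⟨a, ha⟩) : V)) := by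
    intro x
    apply inv_eq E hinv
    have h1 : (Submodule.Quotient.mk (repS E x + ⟨a, ha⟩) : Qm E i l)
        = Submodule.Quotient.mk (repS E (x + Submodule.Quotient.mk ⟨a, ha⟩)) := by
      rw [Submodule.Quotient.mk_add, mk_repS, mk_repS]
    have := (qm_eq E).mp h1
    simpa using this
  calc ∑ x : Qm E i l, f ((repS E x : V) + a)
      = ∑ x : Qm E i l, f ((repS E (x + Submodule.Quotient.mk ⟨a, ha⟩) : V)) :=
        Finset.sum_congr rfl (fun x _ => key x)
    _ = ∑ x : Qm E i l, f ((repS E x : V)) :=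
        Equiv.sum_comp (Equiv.addRight (Submodule.Quotient.mk ⟨a, ha⟩ : Qm E i l))
          (fun x => f ((repS E x : V)))

lemma S_ind {i j : I} (hij : i ≤ j) :
    S E i j (fun v => if v ∈ E.F j then (1:ℂ) else 0) = nn E i j := by
  classical
  haveI := finiteQ E hij
  haveI : Fintype (Qm E i j) := Fintype.ofFinite _
  rw [S, finsum_eq_sum_of_fintype]
  rw [Finset.sum_congr rfl (fun x _ => if_pos (repS E x).2), Finset.sum_const,
    Finset.card_univ, nn, Nat.card_eq_fintype_card, nsmul_eq_mul, mul_one]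

lemma nn_mul {k i l : I} (hki : k ≤ i) (hil : i ≤ l) :
    (nn E k l : ℂ) = (nn E k i : ℂ) * nn E i l := by
  have h3 := S_refine E hki hil (fun v => if v ∈ E.F l then (1:ℂ) else 0)
    (ind_inv E hil)
  rwa [S_ind E (le_trans hki hil), S_ind E hil] at h3

noncomputable def i0 : I := E.nonempty.some

noncomputable def c (i : I) : ℂ :=
  (nn E (exists_lb E i (i0 E)).choose i : ℂ) / (nn E (exists_lb E i (i0 E)).choose (i0 E) : ℂ)

lemma div_eq_of_le {m k i : I} (hmk : m ≤ k) (hki : k ≤ i) (hki0 : k ≤ i0 E) :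
    (nn E k i : ℂ) / nn E k (i0 E) = (nn E m i : ℂ) / nn E m (i0 E) := by
  rw [nn_mul E hmk hki, nn_mul E hmk hki0, mul_div_mul_left _ _ (nn_ne_zero E hmk)]

lemma c_eq {i k : I} (h1 : k ≤ i) (h2 : k ≤ i0 E) :
    c E i = (nn E k i : ℂ) / nn E k (i0 E) := by
  obtain ⟨hk'1, hk'2⟩ := (exists_lb E i (i0 E)).choose_spec
  obtain ⟨m, hm1, hm2⟩ := exists_lb E k (exists_lb E i (i0 E)).choose
  rw [c, div_eq_of_le E hm2 hk'1 hk'2, div_eq_of_le E hm1 h1 h2]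

lemma c_mul {k i : I} (hki : k ≤ i) : c E i = (nn E k i : ℂ) * c E k := by
  obtain ⟨m, hm1, hm2⟩ := exists_lb E k (i0 E)
  rw [c_eq E (le_trans hm1 hki) hm2, c_eq E hm1 hm2, nn_mul E hm1 hki]
  ring

lemma c_i0 : c E (i0 E) = 1 := by
  obtain ⟨h1, h2⟩ := (exists_lb E (i0 E) (i0 E)).choose_spec
  rw [c]
  exact div_self (nn_ne_zero E h2)

lemma c_ne_zero (i : I) : c E i ≠ 0 := by
  obtain ⟨h1, h2⟩ := (exists_lb E i (i0 E)).choose_spec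
  rw [c]
  exact div_ne_zero (nn_ne_zero E h1) (nn_ne_zero E h2)

lemma W_eq {f : V → ℂ} {i j i' j' : I} (hij : i ≤ j)
    (hs : ∀ v ∉ E.F j, f v = 0) (hv : ∀ w ∈ E.F i, ∀ v, f (v + w) = f v)
    (hij' : i' ≤ j') (hs' : ∀ v ∉ E.F j', f v = 0)
    (hv' : ∀ w ∈ E.F i', ∀ v, f (v + w) = f v) :
    c E i * S E i j f = c E i' * S E i' j' f := by
  obtain ⟨k, hk1, hk2⟩ := exists_lb E i i'
  obtain ⟨l, hl1, hl2⟩ := exists_ub E j j'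
  have step : ∀ (i'' j'' : I), i'' ≤ j'' → j'' ≤ l → k ≤ i'' →
      (∀ v ∉ E.F j'', f v = 0) → (∀ w ∈ E.F i'', ∀ v, f (v + w) = f v) →
      c E i'' * S E i'' j'' f = c E k * S E k l f := by
    intro i'' j'' h1 h2 h3 hs'' hv''
    rw [S_extend E h1 h2 f hs'' hv'', S_refine E h3 (le_trans h1 h2) f hv'', c_mul E h3]
    ring
  rw [step i j hij hl1 hk1 hs hv, step i' j' hij' hl2 hk2 hs' hv']

noncomputable def wi {f : V → ℂ} (hf : MemD E f) : I := hf.choose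

noncomputable def wj {f : V → ℂ} (hf : MemD E f) : I := hf.choose_spec.choose

lemma wspec {f : V → ℂ} (hf : MemD E f) :
    wi E hf ≤ wj E hf ∧ (∀ v ∉ E.F (wj E hf), f v = 0) ∧
      (∀ w ∈ E.F (wi E hf), ∀ v, f (v + w) = f v) :=
  hf.choose_spec.choose_spec

noncomputable def mu0 (f : ↥(Dspace E)) : ℂ :=
  c E (wi E (memD E f.2)) * S E (wi E (memD E f.2)) (wj E (memD E f.2)) f.1

lemma mu0_eq (f : ↥(Dspace E)) {i j : I} (hij : i ≤ j)
    (hs : ∀ v ∉ E.F j, f.1 v = 0) (hv : ∀ w ∈ E.F i, ∀ v, f.1 (v + w) = f.1 v) :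
    mu0 E f = c E i * S E i j f.1 := by
  obtain ⟨h1, h2, h3⟩ := wspec E (memD E f.2)
  exact W_eq E h1 h2 h3 hij hs hv

noncomputable def mu : ↥(Dspace E) →ₗ[ℂ] ℂ where
  toFun := mu0 E
  map_add' f g := by
    obtain ⟨i1, j1, h1, s1, v1⟩ := memD E f.2
    obtain ⟨i2, j2, h2, s2, v2⟩ := memD E g.2
    obtain ⟨k, hk1, hk2⟩ := exists_lb E i1 i2
    obtain ⟨l, hl1, hl2⟩ := exists_ub E j1 j2
    have hkl : k ≤ l := le_trans hk1 (le_trans h1 hl1)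
    have sf : ∀ v ∉ E.F l, f.1 v = 0 := fun v hv => s1 v (fun h => hv (E.mono hl1 h))
    have sg : ∀ v ∉ E.F l, g.1 v = 0 := fun v hv => s2 v (fun h => hv (E.mono hl2 h))
    have vf : ∀ w ∈ E.F k, ∀ v, f.1 (v + w) = f.1 v := fun w hw v => v1 w (E.mono hk1 hw) v
    have vg : ∀ w ∈ E.F k, ∀ v, g.1 (v + w) = g.1 v := fun w hw v => v2 w (E.mono hk2 hw) v
    have sfg : ∀ v ∉ E.F l, (f + g).1 v = 0 := by
      intro v hv
      show f.1 v + g.1 v = 0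
      rw [sf v hv, sg v hv, add_zero]
    have vfg : ∀ w ∈ E.F k, ∀ v, (f + g).1 (v + w) = (f + g).1 v := by
      intro w hw v
      show f.1 (v + w) + g.1 (v + w) = f.1 v + g.1 v
      rw [vf w hw v, vg w hw v]
    rw [mu0_eq E (f + g) hkl sfg vfg, mu0_eq E f hkl sf vf, mu0_eq E g hkl sg vg]
    have hsum : S E k l (f + g).1 = S E k l f.1 + S E k l g.1 := by
      classical
      haveI := finiteQ E hkl
      haveI : Fintype (Qm E k l) := Fintype.ofFinite _
      rw [S, S, S, finsum_eq_sum_of_fintype, finsum_eq_sum_of_fintype,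
        finsum_eq_sum_of_fintype, ← Finset.sum_add_distrib]
      rfl
    rw [hsum]
    ring
  map_smul' a f := by
    show mu0 E (a • f) = a • mu0 E f
    rw [smul_eq_mul]
    obtain ⟨i, j, hij, hs, hv⟩ := memD E f.2
    have sa : ∀ v ∉ E.F j, (a • f).1 v = 0 := by
      intro v hv'
      show a * f.1 v = 0
      rw [hs v hv', mul_zero]
    have va : ∀ w ∈ E.F i, ∀ v, (a • f).1 (v + w) = (a • f).1 v := by
      intro w hw v
      show a * f.1 (v + w) = a * f.1 v
      rw [hv w hw v]
    rw [mu0_eq E (a • f) hij sa va, mu0_eq E f hij hs hv]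
    have hsum : S E i j (a • f).1 = a * S E i j f.1 := by
      classical
      haveI := finiteQ E hij
      haveI : Fintype (Qm E i j) := Fintype.ofFinite _
      rw [S, S, finsum_eq_sum_of_fintype, finsum_eq_sum_of_fintype, Finset.mul_sum]
      rfl
    rw [hsum]
    ring

lemma mu_invariant : IsInvariantMeasure E (mu E) := by
  intro a f
  obtain ⟨i, j, hij, hs, hv⟩ := memD E f.2
  obtain ⟨ja, hja⟩ := E.union_eq_top a
  obtain ⟨l, hl1, hl2⟩ := exists_ub E j ja
  have hil : i ≤ l := le_trans hij hl1
  have ha : a ∈ E.F l := E.mono hl2 hja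
  have hsl : ∀ v ∉ E.F l, f.1 v = 0 := fun v hv' => hs v (fun h => hv' (E.mono hl1 h))
  have hsT : ∀ v ∉ E.F l, (fun v => f.1 (v + a)) v = 0 := by
    intro v hv'
    show f.1 (v + a) = 0
    apply hs
    intro hmem
    apply hv'
    have := (E.F l).sub_mem (E.mono hl1 hmem) ha
    simpa using this
  have hvT : ∀ w ∈ E.F i, ∀ v, (fun v => f.1 (v + a)) (v + w) = (fun v => f.1 (v + a)) v := by
    intro w hw v
    show f.1 (v + w + a) = f.1 (v + a)
    rw [add_right_comm]
    exact hv w hw (v + a)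
  show mu0 E ⟨fun v => f.1 (v + a), translate_mem E f.2 a⟩ = mu0 E f
  rw [mu0_eq E ⟨fun v => f.1 (v + a), translate_mem E f.2 a⟩ hil hsT hvT,
    mu0_eq E f hil hsl hv]
  congr 1
  exact S_translate E hil f.1 hv a ha

noncomputable def indE (i : I) : ↥(Dspace E) :=
  ⟨fun v => if v ∈ E.F i then (1:ℂ) else 0, indicator_mem E i⟩

lemma mu_ind_i0 : mu E (indE E (i0 E)) = 1 := by
  show mu0 E (indE E (i0 E)) = 1
  have hs : ∀ v ∉ E.F (i0 E), (indE E (i0 E)).1 v = 0 := fun v hv => if_neg hv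
  have hv : ∀ w ∈ E.F (i0 E), ∀ v, (indE E (i0 E)).1 (v + w) = (indE E (i0 E)).1 v :=
    fun w hw v => ind_inv E le_rfl w hw v
  rw [mu0_eq E _ le_rfl hs hv, c_i0, one_mul]
  have := S_ind E (le_refl (i0 E))
  rw [show (indE E (i0 E)).1 = fun v => if v ∈ E.F (i0 E) then (1:ℂ) else 0 from rfl, this]
  haveI := finiteQ E (le_refl (i0 E))
  haveI : Subsingleton (Qm E (i0 E) (i0 E)) := by
    constructor
    intro x y
    rw [← mk_repS E x, ← mk_repS E y, qm_eq]
    exact sub_mem (repS E x).2 (repS E y).2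
  haveI : Nonempty (Qm E (i0 E) (i0 E)) := ⟨0⟩
  have : nn E (i0 E) (i0 E) = 1 := Nat.card_unique
  rw [this, Nat.cast_one]

lemma mu_apply (μ : ↥(Dspace E) →ₗ[ℂ] ℂ) (hμ : IsInvariantMeasure E μ)
    (f : ↥(Dspace E)) {i j : I} (hij : i ≤ j)
    (hs : ∀ v ∉ E.F j, f.1 v = 0) (hv : ∀ w ∈ E.F i, ∀ v, f.1 (v + w) = f.1 v) :
    μ f = (∑ᶠ x : Qm E i j, f.1 ((repS E x : V))) * μ (indE E i) := by
  classical
  haveI := finiteQ E hij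
  haveI : Fintype (Qm E i j) := Fintype.ofFinite _
  set T : Qm E i j → ↥(Dspace E) := fun x =>
    ⟨fun v => (indE E i).1 (v + (-(repS E x : V))), translate_mem E (indE E i).2 _⟩ with hT
  have hpoint : ∀ v : V, f.1 v = ∑ x : Qm E i j,
      f.1 ((repS E x : V)) * (if v + -(repS E x : V) ∈ E.F i then (1:ℂ) else 0) := by
    intro v
    by_cases hvj : v ∈ E.F j
    · set x0 : Qm E i j := Submodule.Quotient.mk ⟨v, hvj⟩ with hx0
      have huniq : ∀ x : Qm E i j, (v + -(repS E x : V) ∈ E.F i) ↔ x = x0 := by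
        intro x
        constructor
        · intro h
          rw [← mk_repS E x, hx0, qm_eq]
          have := neg_mem h
          simpa [sub_eq_add_neg] using this
        · rintro rfl
          have h1 : ((repS E x0 : V) - v) ∈ E.F i := by
            have : (Submodule.Quotient.mk (repS E x0) : Qm E i j)
                = Submodule.Quotient.mk ⟨v, hvj⟩ := by rw [mk_repS]
            exact (qm_eq E).mp this
          have := neg_mem h1
          simpa [sub_eq_add_neg, neg_add, neg_neg, add_comm] using this
      have hval : f.1 ((repS E x0 : V)) = f.1 v := by
        apply inv_eq E hv
        have : (Submodule.Quotient.mk (repS E x0) : Qm E i j)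
            = Submodule.Quotient.mk ⟨v, hvj⟩ := by rw [mk_repS]
        exact (qm_eq E).mp this
      have : ∀ x : Qm E i j,
          f.1 ((repS E x : V)) * (if v + -(repS E x : V) ∈ E.F i then (1:ℂ) else 0)
            = if x = x0 then f.1 v else 0 := by
        intro x
        by_cases hx : x = x0
        · rw [if_pos ((huniq x).mpr hx), if_pos hx, mul_one, hx, hval]
        · rw [if_neg (fun h => hx ((huniq x).mp h)), if_neg hx, mul_zero]
      rw [Finset.sum_congr rfl (fun x _ => this x), Finset.sum_ite_eq' Finset.univ x0
        (fun _ => f.1 v), if_pos (Finset.mem_univ _)]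
    · have hzero : ∀ x : Qm E i j, (if v + -(repS E x : V) ∈ E.F i then (1:ℂ) else 0) = 0 := by
        intro x
        rw [if_neg]
        intro h
        apply hvj
        have h1 : (v + -(repS E x : V)) ∈ E.F j := E.mono hij h
        have := add_mem h1 (repS E x).2
        simpa using this
      rw [Finset.sum_congr rfl (fun x _ => by rw [hzero x, mul_zero]), Finset.sum_const_zero,
        hs v hvj]
  have hdecomp : f = ∑ x : Qm E i j, f.1 ((repS E x : V)) • T x := by
    apply Subtype.ext
    rw [AddSubmonoidClass.coe_finset_sum]
    funext v
    rw [Finset.sum_apply]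
    exact hpoint v
  have hTval : ∀ x : Qm E i j, μ (T x) = μ (indE E i) := fun x => hμ (-(repS E x : V)) (indE E i)
  calc μ f = μ (∑ x : Qm E i j, f.1 ((repS E x : V)) • T x) := congrArg (⇑μ) hdecomp
    _ = ∑ x : Qm E i j, f.1 ((repS E x : V)) * μ (T x) := by
        rw [map_sum]
        exact Finset.sum_congr rfl (fun x _ => by rw [map_smul, smul_eq_mul])
    _ = ∑ x : Qm E i j, f.1 ((repS E x : V)) * μ (indE E i) :=
        Finset.sum_congr rfl (fun x _ => by rw [hTval x])
    _ = (∑ᶠ x : Qm E i j, f.1 ((repS E x : V))) * μ (indE E i) := by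
        rw [finsum_eq_sum_of_fintype, Finset.sum_mul]

lemma ind_scale (μ : ↥(Dspace E) →ₗ[ℂ] ℂ) (hμ : IsInvariantMeasure E μ)
    {i j : I} (hij : i ≤ j) :
    μ (indE E j) = (nn E i j : ℂ) * μ (indE E i) := by
  have hs : ∀ v ∉ E.F j, (indE E j).1 v = 0 := fun v hv => if_neg hv
  have hv : ∀ w ∈ E.F i, ∀ v, (indE E j).1 (v + w) = (indE E j).1 v :=
    fun w hw v => ind_inv E hij w hw v
  rw [mu_apply E μ hμ (indE E j) hij hs hv]
  congr 1
  have := S_ind E hij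
  rw [S] at this
  exact this

lemma eq_zero_of (μ : ↥(Dspace E) →ₗ[ℂ] ℂ) (hμ : IsInvariantMeasure E μ)
    (h0 : μ (indE E (i0 E)) = 0) : μ = 0 := by
  have hall : ∀ i, μ (indE E i) = 0 := by
    intro i
    obtain ⟨l, hl1, hl2⟩ := exists_ub E i (i0 E)
    have h1 : μ (indE E l) = 0 := by rw [ind_scale E μ hμ hl2, h0, mul_zero]
    have h2 := ind_scale E μ hμ hl1
    rw [h1] at h2
    exact (mul_eq_zero.mp h2.symm).resolve_left (nn_ne_zero E hl1)
  apply LinearMap.ext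
  intro f
  obtain ⟨i, j, hij, hs, hv⟩ := memD E f.2
  rw [mu_apply E μ hμ f hij hs hv, hall i, mul_zero]
  rfl

end Fin

end Statement11Aux

/-- for a `C₁`-space `E` over a finite field, the `ℂ`-vector space of
invariant measures on `E` (translation-invariant `ℂ`-linear functionals on `D(E)`) is
one-dimensional: it contains a nonzero element, and any two of its elements are
`ℂ`-linearly dependent. -/
theorem statement11 (Fq : Type) [Field Fq] [Fintype Fq] (I : Type) [PartialOrder I]
    (V : Type) [AddCommGroup V] [Module Fq V] (E : C1Space Fq I V) :
    (∃ μ : ↥(Dspace E) →ₗ[ℂ] ℂ, IsInvariantMeasure E μ ∧ μ ≠ 0) ∧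
    (∀ μ₁ μ₂ : ↥(Dspace E) →ₗ[ℂ] ℂ, IsInvariantMeasure E μ₁ → IsInvariantMeasure E μ₂ →
      ∃ c₁ c₂ : ℂ, ¬(c₁ = 0 ∧ c₂ = 0) ∧ c₁ • μ₁ + c₂ • μ₂ = 0) := by
  classical
  constructor
  · refine ⟨Statement11Aux.mu E, Statement11Aux.mu_invariant E, ?_⟩
    intro h
    have h1 := Statement11Aux.mu_ind_i0 E
    rw [h] at h1
    simp at h1
  · intro μ1 μ2 h1 h2
    by_cases hz : μ1 (Statement11Aux.indE E (Statement11Aux.i0 E)) = 0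
    · exact ⟨1, 0, by simp, by rw [Statement11Aux.eq_zero_of E μ1 h1 hz]; simp⟩
    · refine ⟨μ2 (Statement11Aux.indE E (Statement11Aux.i0 E)),
        -(μ1 (Statement11Aux.indE E (Statement11Aux.i0 E))), ?_, ?_⟩
      · rintro ⟨-, hc2⟩
        exact hz (by simpa using hc2)
      · have hinv : IsInvariantMeasure E
            (μ2 (Statement11Aux.indE E (Statement11Aux.i0 E)) • μ1 +
              -(μ1 (Statement11Aux.indE E (Statement11Aux.i0 E))) • μ2) := by
          intro a f
          simp [h1 a f, h2 a f]
        apply Statement11Aux.eq_zero_of E _ hinv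
        simp only [LinearMap.add_apply, LinearMap.smul_apply, smul_eq_mul, LinearMap.neg_apply]
        ring
end

section
/- Let E = (I, F, V) be a C₁-space over F_q and μ a nonzero invariant measure on E. Then μ(δ_{F(i)}) ≠ 0 for every i ∈ I, where δ_{F(i)} ∈ D(E) is the indicator function of the subspace F(i). -/
open scoped Classical

variable {Fq : Type} [Field Fq] {I : Type} [PartialOrder I]
  {V : Type} [AddCommGroup V] [Module Fq V]

/-- The indicator of `F(i)` as an element of `D(E)`. -/
noncomputable def indF (E : C1Space Fq I V) (i : I) : ↥(Dspace E) :=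
  ⟨fun v => if v ∈ E.F i then (1 : ℂ) else 0, indicator_mem E i⟩

/-- Core computation: if `f ∈ D(E)` is supported in `F(j)` and invariant under `F(i)`,
then `μ f` is an explicit multiple of `μ (indF E i)`. -/
theorem core_decomp (E : C1Space Fq I V) (μ : ↥(Dspace E) →ₗ[ℂ] ℂ)
    (hμ : IsInvariantMeasure E μ) {i j : I} (hij : i ≤ j)
    [Fintype (↥(E.F j) ⧸ Submodule.comap (E.F j).subtype (E.F i))]
    (f : ↥(Dspace E)) (hz : ∀ v, v ∉ E.F j → (f : V → ℂ) v = 0)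
    (hinv : ∀ w ∈ E.F i, ∀ v, (f : V → ℂ) (v + w) = (f : V → ℂ) v) :
    μ f = (∑ c : ↥(E.F j) ⧸ Submodule.comap (E.F j).subtype (E.F i),
      (f : V → ℂ) ((Quotient.out c : ↥(E.F j)) : V)) * μ (indF E i) := by
  letI Q := ↥(E.F j) ⧸ Submodule.comap (E.F j).subtype (E.F i)
  set rep : (↥(E.F j) ⧸ Submodule.comap (E.F j).subtype (E.F i)) → V :=
    fun c => ((Quotient.out c : ↥(E.F j)) : V) with hrep
  have hrepmem : ∀ c : ↥(E.F j) ⧸ Submodule.comap (E.F j).subtype (E.F i), rep c ∈ E.F j := fun c => (Quotient.out c).2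
  set transl : (↥(E.F j) ⧸ Submodule.comap (E.F j).subtype (E.F i)) → ↥(Dspace E) := fun c =>
    ⟨fun v => ((indF E i : V → ℂ)) (v + (-(rep c))),
      translate_mem E (indF E i).2 (-(rep c))⟩ with htransl
  have hμtransl : ∀ c : ↥(E.F j) ⧸ Submodule.comap (E.F j).subtype (E.F i),
      μ (transl c) = μ (indF E i) := fun c =>
    hμ (-(rep c)) (indF E i)
  have hdec : f = ∑ c : ↥(E.F j) ⧸ Submodule.comap (E.F j).subtype (E.F i), (f : V → ℂ) (rep c) • transl c := by
    apply Subtype.ext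
    have hcoe : ((∑ c : ↥(E.F j) ⧸ Submodule.comap (E.F j).subtype (E.F i), (f : V → ℂ) (rep c) • transl c : ↥(Dspace E)) : V → ℂ)
        = ∑ c : ↥(E.F j) ⧸ Submodule.comap (E.F j).subtype (E.F i), (f : V → ℂ) (rep c) • ((transl c : V → ℂ)) := by
      push_cast [Submodule.coe_sum]
      rfl
    funext v
    rw [hcoe]
    rw [Finset.sum_apply]
    by_cases hv : v ∈ E.F j
    · have hterm : ∀ c : ↥(E.F j) ⧸ Submodule.comap (E.F j).subtype (E.F i),
          ((f : V → ℂ) (rep c) • (transl c : V → ℂ)) v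
            = if (Submodule.Quotient.mk ⟨v, hv⟩ : Q) = c then (f : V → ℂ) v else 0 := by
        intro c
        have hval : (transl c : V → ℂ) v = if v - rep c ∈ E.F i then (1 : ℂ) else 0 := by
          show (if v + -(rep c) ∈ E.F i then (1 : ℂ) else 0) = _
          rw [← sub_eq_add_neg]
        have hmkout : (Submodule.Quotient.mk (Quotient.out c) : Q) = c := Quotient.out_eq c
        have hiff : v - rep c ∈ E.F i ↔ (Submodule.Quotient.mk ⟨v, hv⟩ : Q) = c := by
          constructor
          · intro h
            rw [← hmkout, Submodule.Quotient.eq]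
            simpa [Submodule.mem_comap, rep] using h
          · intro h
            have h2 : (⟨v, hv⟩ : ↥(E.F j)) - Quotient.out c ∈
                Submodule.comap (E.F j).subtype (E.F i) :=
              (Submodule.Quotient.eq _).mp (h.trans hmkout.symm)
            simpa [Submodule.mem_comap, rep] using h2
        show (f : V → ℂ) (rep c) * (transl c : V → ℂ) v = _
        rw [hval]
        by_cases hmem : v - rep c ∈ E.F i
        · have hfeq : (f : V → ℂ) (rep c) = (f : V → ℂ) v := by
            have : rep c - v ∈ E.F i := by
              have := (E.F i).neg_mem hmem
              simpa using this
            have h2 := hinv (rep c - v) this v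
            simpa using h2
          simp [hmem, hiff.mp hmem, hfeq]
        · have : ¬ ((Submodule.Quotient.mk ⟨v, hv⟩ : Q) = c) := fun h => hmem (hiff.mpr h)
          simp [hmem, this]
      rw [Finset.sum_congr rfl (fun c _ => hterm c)]
      rw [Finset.sum_ite_eq]
      simp
    · rw [hz v hv]
      apply (Finset.sum_eq_zero _).symm
      intro c _
      have hval : (transl c : V → ℂ) v = if v - rep c ∈ E.F i then (1 : ℂ) else 0 := by
        show (if v + -(rep c) ∈ E.F i then (1 : ℂ) else 0) = _
        rw [← sub_eq_add_neg]
      have hnmem : v - rep c ∉ E.F i := by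
        intro hmem
        apply hv
        have : (v - rep c) + rep c ∈ E.F j := (E.F j).add_mem (E.mono hij hmem) (hrepmem c)
        simpa using this
      show (f : V → ℂ) (rep c) * (transl c : V → ℂ) v = 0
      rw [hval]
      simp [hnmem]
  calc μ f = μ (∑ c : ↥(E.F j) ⧸ Submodule.comap (E.F j).subtype (E.F i), (f : V → ℂ) (rep c) • transl c) := by rw [← hdec]
    _ = ∑ c : ↥(E.F j) ⧸ Submodule.comap (E.F j).subtype (E.F i), (f : V → ℂ) (rep c) * μ (transl c) := by
        rw [map_sum]; simp [smul_eq_mul]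
    _ = ∑ c : ↥(E.F j) ⧸ Submodule.comap (E.F j).subtype (E.F i), (f : V → ℂ) (rep c) * μ (indF E i) := by
        simp only [hμtransl]
    _ = (∑ c : ↥(E.F j) ⧸ Submodule.comap (E.F j).subtype (E.F i),
          (f : V → ℂ) (rep c)) * μ (indF E i) := by rw [Finset.sum_mul]
    _ = (∑ c : ↥(E.F j) ⧸ Submodule.comap (E.F j).subtype (E.F i),
          (f : V → ℂ) ((Quotient.out c : ↥(E.F j)) : V)) * μ (indF E i) := rfl

/-- Comparison of the measures of indicators: `μ(δ_{F(j)}) = #(F(j)/F(i)) ⬝ μ(δ_{F(i)})`. -/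
theorem indF_comparison (E : C1Space Fq I V) [Fintype Fq] (μ : ↥(Dspace E) →ₗ[ℂ] ℂ)
    (hμ : IsInvariantMeasure E μ) {i j : I} (hij : i ≤ j) :
    μ (indF E j) = (Nat.card (↥(E.F j) ⧸ Submodule.comap (E.F j).subtype (E.F i)) : ℂ)
      * μ (indF E i) := by
  haveI := E.finite_quot i j hij
  haveI : Finite (↥(E.F j) ⧸ Submodule.comap (E.F j).subtype (E.F i)) :=
    Module.finite_of_finite Fq
  haveI : Fintype (↥(E.F j) ⧸ Submodule.comap (E.F j).subtype (E.F i)) :=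
    Fintype.ofFinite _
  have hz : ∀ v, v ∉ E.F j → ((indF E j : V → ℂ)) v = 0 := by
    intro v hv; simp [indF, hv]
  have hinv : ∀ w ∈ E.F i, ∀ v, ((indF E j : V → ℂ)) (v + w) = ((indF E j : V → ℂ)) v := by
    intro w hw v
    have hw' : w ∈ E.F j := E.mono hij hw
    show (if v + w ∈ E.F j then (1 : ℂ) else 0) = (if v ∈ E.F j then (1 : ℂ) else 0)
    by_cases h : v ∈ E.F j
    · simp [h, (E.F j).add_mem h hw']
    · have h2 : v + w ∉ E.F j := fun hvw => h (by simpa using (E.F j).sub_mem hvw hw')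
      simp [h, h2]
  have := core_decomp E μ hμ hij (indF E j) hz hinv
  rw [this]
  congr 1
  have hval : ∀ c : ↥(E.F j) ⧸ Submodule.comap (E.F j).subtype (E.F i),
      ((indF E j : V → ℂ)) ((Quotient.out c : ↥(E.F j)) : V) = 1 := by
    intro c
    simp [indF, (Quotient.out c).2]
  rw [Finset.sum_congr rfl (fun c _ => hval c)]
  simp [Nat.card_eq_fintype_card]

/-- If a measure kills all the indicators `δ_{F(i)}`, it is zero. -/
theorem measure_eq_zero_of_indF (E : C1Space Fq I V) [Fintype Fq]
    (μ : ↥(Dspace E) →ₗ[ℂ] ℂ) (hμ : IsInvariantMeasure E μ)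
    (h0 : ∀ i : I, μ (indF E i) = 0) : μ = 0 := by
  apply LinearMap.ext
  intro f
  obtain ⟨i, j, hij, hz, hinv⟩ := f.2
  haveI := E.finite_quot i j hij
  haveI : Finite (↥(E.F j) ⧸ Submodule.comap (E.F j).subtype (E.F i)) :=
    Module.finite_of_finite Fq
  haveI : Fintype (↥(E.F j) ⧸ Submodule.comap (E.F j).subtype (E.F i)) :=
    Fintype.ofFinite _
  have := core_decomp E μ hμ hij f hz hinv
  rw [LinearMap.zero_apply, this, h0 i, mul_zero]

/-- if `μ` is a nonzero invariant measure on a `C₁`-space `E` over a finite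
field, then `μ(δ_{F(i)}) ≠ 0` for every `i ∈ I`. -/
theorem statement12 (Fq : Type) [Field Fq] [Fintype Fq] (I : Type) [PartialOrder I]
    (V : Type) [AddCommGroup V] [Module Fq V] (E : C1Space Fq I V)
    (μ : ↥(Dspace E) →ₗ[ℂ] ℂ) (hμ : IsInvariantMeasure E μ) (hμ0 : μ ≠ 0) (i : I) :
    μ ⟨fun v => if v ∈ E.F i then (1 : ℂ) else 0, indicator_mem E i⟩ ≠ 0 := by
  intro h
  have h' : μ (indF E i) = 0 := h
  have hcard_ne : ∀ {k l : I}, k ≤ l →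
      ((Nat.card (↥(E.F l) ⧸ Submodule.comap (E.F l).subtype (E.F k)) : ℂ)) ≠ 0 := by
    intro k l hkl
    haveI := E.finite_quot k l hkl
    haveI : Finite (↥(E.F l) ⧸ Submodule.comap (E.F l).subtype (E.F k)) :=
      Module.finite_of_finite Fq
    haveI : Nonempty (↥(E.F l) ⧸ Submodule.comap (E.F l).subtype (E.F k)) :=
      ⟨Submodule.Quotient.mk 0⟩
    exact_mod_cast Nat.card_pos.ne'
  have hall : ∀ i' : I, μ (indF E i') = 0 := by
    intro i'
    obtain ⟨k, l, hk1, -, hk2, -⟩ := E.directed i i'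
    have e1 := indF_comparison E μ hμ hk1
    have hk0 : μ (indF E k) = 0 := by
      rw [h'] at e1
      rcases mul_eq_zero.mp e1.symm with hc | hc
      · exact absurd hc (hcard_ne hk1)
      · exact hc
    have e2 := indF_comparison E μ hμ hk2
    rw [e2, hk0, mul_zero]
  exact hμ0 (measure_eq_zero_of_indF E μ hμ hall)
end

section
/- The Fourier transform maps D(E) into the Bruhat space of the dual filtered space: let E = (I, F, V) be a C₁-space over F_q, μ an invariant measure on E, and f ∈ D(E) with witnesses i ≤ j in I (f vanishes outside F(j) and T_w f = f for all w ∈ F(i)). Then F_μ(f) vanishes at every w ∈ V̌ with w ∉ F(i)^⊥, and F_μ(f)(w + b) = F_μ(f)(w) for all w ∈ V̌ and b ∈ F(j)^⊥. -/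
open scoped Classical

variable {Fq : Type} [Field Fq] {I : Type} [PartialOrder I]
  {V : Type} [AddCommGroup V] [Module Fq V]

/-- Membership of a linear functional `w : V* = Hom_{Fq}(V, Fq)` in
`V̌ = ⋃ᵢ F(i)^⊥`: `w` annihilates some filtration subspace. -/
def MemDualCheck (E : C1Space Fq I V) (w : Module.Dual Fq V) : Prop :=
  ∃ i : I, ∀ u ∈ E.F i, w u = 0

theorem memDualCheck_sub (E : C1Space Fq I V) {w b : Module.Dual Fq V}
    (hw : MemDualCheck E w) (hb : MemDualCheck E b) : MemDualCheck E (w - b) := by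
  obtain ⟨i, hi⟩ := hw
  obtain ⟨i', hi'⟩ := hb
  obtain ⟨k, l₀, hk₁, -, hk₂, -⟩ := E.directed i i'
  exact ⟨k, fun u hu => by
    simp [LinearMap.sub_apply, hi u (E.mono hk₁ hu), hi' u (E.mono hk₂ hu)]⟩

theorem memDualCheck_add (E : C1Space Fq I V) {w b : Module.Dual Fq V}
    (hw : MemDualCheck E w) (hb : MemDualCheck E b) : MemDualCheck E (w + b) := by
  obtain ⟨i, hi⟩ := hw
  obtain ⟨i', hi'⟩ := hb
  obtain ⟨k, l₀, hk₁, -, hk₂, -⟩ := E.directed i i'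
  exact ⟨k, fun u hu => by
    simp [LinearMap.add_apply, hi u (E.mono hk₁ hu), hi' u (E.mono hk₂ hu)]⟩

/-- Multiplying an element of `D(E)` by a "character" function `v ↦ c (w v)`,
for `w ∈ V̌`, stays in `D(E)`. -/
theorem mul_char_mem (E : C1Space Fq I V) {f : V → ℂ} (hf : f ∈ Dspace E)
    {w : Module.Dual Fq V} (hw : MemDualCheck E w) (c : Fq → ℂ)
    (hc : ∀ x y : Fq, c (x + y) = c x * c y) (hc0 : c 0 = 1) :
    (fun v => f v * c (w v)) ∈ Dspace E := by
  obtain ⟨i, j, hij, hz, hinv⟩ := hf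
  obtain ⟨i', hi'⟩ := hw
  obtain ⟨k, l₀, hk₁, -, hk₂, -⟩ := E.directed i i'
  refine ⟨k, j, le_trans hk₁ hij, ?_, ?_⟩
  · intro v hv
    show f v * c (w v) = 0
    rw [hz v hv, zero_mul]
  · intro u hu v
    show f (v + u) * c (w (v + u)) = f v * c (w v)
    rw [hinv u (E.mono hk₁ hu) v, map_add, hc, hi' u (E.mono hk₂ hu), hc0, mul_one]

theorem conj_char_mem (E : C1Space Fq I V) (ψ : AddChar Fq ℂ) {f : V → ℂ}
    (hf : f ∈ Dspace E) {w : Module.Dual Fq V} (hw : MemDualCheck E w) :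
    (fun v => f v * (starRingEnd ℂ) (ψ (w v))) ∈ Dspace E :=
  mul_char_mem E hf hw (fun x => (starRingEnd ℂ) (ψ x))
    (fun x y => by simp only [AddChar.map_add_eq_mul, map_mul])
    (by simp only [AddChar.map_zero_eq_one, map_one])

theorem char_mul_mem (E : C1Space Fq I V) (ψ : AddChar Fq ℂ) {f : V → ℂ}
    (hf : f ∈ Dspace E) {b : Module.Dual Fq V} (hb : MemDualCheck E b) :
    (fun v => ψ (b v) * f v) ∈ Dspace E := by
  have h := mul_char_mem E hf hb (fun x => ψ x) (fun x y => ψ.map_add_eq_mul x y)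
    ψ.map_zero_eq_one
  have hfun : (fun v => ψ (b v) * f v) = fun v => f v * ψ (b v) := by
    funext v; ring
  rw [hfun]
  exact h

/-- The Fourier transform of `f ∈ D(E)` relative to an invariant measure `μ`, as a function
on `V̌ = ⋃ᵢ F(i)^⊥`: `F_μ(f)(w) = μ (v ↦ f v * conj (ψ (w v)))`. -/
noncomputable def fourierD (E : C1Space Fq I V) (ψ : AddChar Fq ℂ)
    (μ : ↥(Dspace E) →ₗ[ℂ] ℂ) (f : ↥(Dspace E))
    (w : {w : Module.Dual Fq V // MemDualCheck E w}) : ℂ :=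
  μ ⟨fun v => (f : V → ℂ) v * (starRingEnd ℂ) (ψ (w.1 v)), conj_char_mem E ψ f.2 w.2⟩

/-- the Fourier transform maps `D(E)` into the Bruhat space of the dual
filtered space: if `f ∈ D(E)` vanishes outside `F(j)` and is `F(i)`-invariant (`i ≤ j`),
then `F_μ(f)` vanishes at every `w ∈ V̌` not annihilating `F(i)`, and `F_μ(f)` is
invariant under translation by every `b ∈ F(j)^⊥`. -/
theorem statement15 (Fq : Type) [Field Fq] [Fintype Fq]
    (ψ : AddChar Fq ℂ) (hψ : ψ ≠ 1)
    (I : Type) [PartialOrder I]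
    (V : Type) [AddCommGroup V] [Module Fq V] (E : C1Space Fq I V)
    (μ : ↥(Dspace E) →ₗ[ℂ] ℂ) (hμ : IsInvariantMeasure E μ)
    (f : V → ℂ) (i j : I) (hij : i ≤ j)
    (hz : ∀ v : V, v ∉ E.F j → f v = 0)
    (hinv : ∀ w ∈ E.F i, ∀ v : V, f (v + w) = f v) :
    (∀ w : {w : Module.Dual Fq V // MemDualCheck E w},
       ¬(∀ u ∈ E.F i, w.1 u = 0) →
       fourierD E ψ μ ⟨f, mem_Dspace ⟨i, j, hij, hz, hinv⟩⟩ w = 0) ∧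
    (∀ (w : {w : Module.Dual Fq V // MemDualCheck E w}) (b : Module.Dual Fq V)
       (hb : ∀ u ∈ E.F j, b u = 0),
       fourierD E ψ μ ⟨f, mem_Dspace ⟨i, j, hij, hz, hinv⟩⟩
           ⟨w.1 + b, memDualCheck_add E w.2 ⟨j, hb⟩⟩
         = fourierD E ψ μ ⟨f, mem_Dspace ⟨i, j, hij, hz, hinv⟩⟩ w) := by
  constructor
  · intro w hw
    push_neg at hw
    obtain ⟨u, hu, hwu⟩ := hw
    obtain ⟨t, ht⟩ := AddChar.ne_one_iff.mp hψ
    set a : V := (t / w.1 u) • u with ha_def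
    have ha : a ∈ E.F i := (E.F i).smul_mem _ hu
    have hwa : w.1 a = t := by
      rw [ha_def, map_smul, smul_eq_mul, div_mul_cancel₀ _ hwu]
    set g : ↥(Dspace E) :=
      ⟨fun v => f v * (starRingEnd ℂ) (ψ (w.1 v)),
        conj_char_mem E ψ (mem_Dspace ⟨i, j, hij, hz, hinv⟩) w.2⟩ with hg_def
    have key := hμ a g
    have heq : (⟨fun v => (g : V → ℂ) (v + a), translate_mem E g.2 a⟩ : ↥(Dspace E))
        = (starRingEnd ℂ) (ψ t) • g := by
      apply Subtype.ext
      funext v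
      show f (v + a) * (starRingEnd ℂ) (ψ (w.1 (v + a)))
        = (starRingEnd ℂ) (ψ t) * (f v * (starRingEnd ℂ) (ψ (w.1 v)))
      rw [hinv a ha v, map_add, hwa, AddChar.map_add_eq_mul, map_mul]
      ring
    rw [heq, map_smul, smul_eq_mul] at key
    have hne : (starRingEnd ℂ) (ψ t) ≠ 1 := by
      intro h
      apply ht
      have := congrArg (starRingEnd ℂ) h
      simpa using this
    have : ((starRingEnd ℂ) (ψ t) - 1) * μ g = 0 := by linear_combination key
    have hfin : μ g = 0 := by
      rcases mul_eq_zero.mp this with h | h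
      · exact absurd (by linear_combination h) hne
      · exact h
    exact hfin
  · intro w b hb
    apply congrArg μ
    apply Subtype.ext
    funext v
    show f v * (starRingEnd ℂ) (ψ ((w.1 + b) v)) = f v * (starRingEnd ℂ) (ψ (w.1 v))
    by_cases hv : v ∈ E.F j
    · rw [LinearMap.add_apply, hb v hv, add_zero]
    · rw [hz v hv, zero_mul, zero_mul]
end

section
/- Well-definedness of the direct image along an admissible epimorphism: let 0 → E₁ →α E₂ →β E₃ → 0 be an admissible triple of C₁-spaces over F_q, f ∈ D(E₂), and μ₁ an invariant measure on E₁. Then (a) for every w' ∈ V₂ the function V₁ → ℂ, v ↦ f(α(v) + w'), lies in D(E₁); (b) if β(w'₁) = β(w'₂) then μ₁(v ↦ f(α(v) + w'₁)) = μ₁(v ↦ f(α(v) + w'₂)); (c) the resulting function β_*(f ⊗ μ₁) : V₃ → ℂ, defined by β_*(f ⊗ μ₁)(w) = μ₁(v ↦ f(α(v) + w')) for any w' with β(w') = w, lies in D(E₃). -/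
open scoped Classical

variable {Fq : Type} [Field Fq] {I : Type} [PartialOrder I]
  {V : Type} [AddCommGroup V] [Module Fq V]

/-- An admissible triple of `C₁`-spaces `0 → E₁ →α E₂ →β E₃ → 0`: a short exact sequence
of the underlying `Fq`-vector spaces such that the filtration of `E₁` is (cofinally)
induced from that of `E₂`, and the filtration of `E₃` is (cofinally) the image of that
of `E₂`. -/
structure AdmissibleTriple {Fq : Type} [Field Fq]
    {I₁ I₂ I₃ : Type} [PartialOrder I₁] [PartialOrder I₂] [PartialOrder I₃]
    {V₁ V₂ V₃ : Type} [AddCommGroup V₁] [Module Fq V₁] [AddCommGroup V₂] [Module Fq V₂]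
    [AddCommGroup V₃] [Module Fq V₃]
    (E₁ : C1Space Fq I₁ V₁) (E₂ : C1Space Fq I₂ V₂) (E₃ : C1Space Fq I₃ V₃)
    (α : V₁ →ₗ[Fq] V₂) (β : V₂ →ₗ[Fq] V₃) : Prop where
  inj : Function.Injective α
  surj : Function.Surjective β
  exact : LinearMap.range α = LinearMap.ker β
  exists_phi1 : ∃ φ₁ : I₂ → I₁, Monotone φ₁ ∧
    (∀ i : I₂, Submodule.map α (E₁.F (φ₁ i)) = E₂.F i ⊓ LinearMap.range α) ∧
    (∀ j : I₁, ∃ i₁ i₂ : I₂, φ₁ i₁ ≤ j ∧ j ≤ φ₁ i₂)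
  exists_phi3 : ∃ φ₃ : I₂ → I₃, Monotone φ₃ ∧
    (∀ i : I₂, E₃.F (φ₃ i) = Submodule.map β (E₂.F i)) ∧
    (∀ j : I₃, ∃ i₁ i₂ : I₂, φ₃ i₁ ≤ j ∧ j ≤ φ₃ i₂)

/-- well-definedness of the direct image along an admissible epimorphism:
for an admissible triple `0 → E₁ →α E₂ →β E₃ → 0`, `f ∈ D(E₂)` and an invariant measure
`μ₁` on `E₁`:
(a) for every `w' ∈ V₂` the function `v ↦ f(α v + w')` lies in `D(E₁)`;
(b) if `β w'₁ = β w'₂` then `μ₁(v ↦ f(α v + w'₁)) = μ₁(v ↦ f(α v + w'₂))`;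
(c) the resulting function `β_*(f ⊗ μ₁) : V₃ → ℂ`, sending `β w'` to
`μ₁(v ↦ f(α v + w'))`, lies in `D(E₃)`. -/
theorem statement17 (Fq : Type) [Field Fq] [Fintype Fq]
    (I₁ I₂ I₃ : Type) [PartialOrder I₁] [PartialOrder I₂] [PartialOrder I₃]
    (V₁ V₂ V₃ : Type) [AddCommGroup V₁] [Module Fq V₁] [AddCommGroup V₂] [Module Fq V₂]
    [AddCommGroup V₃] [Module Fq V₃]
    (E₁ : C1Space Fq I₁ V₁) (E₂ : C1Space Fq I₂ V₂) (E₃ : C1Space Fq I₃ V₃)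
    (α : V₁ →ₗ[Fq] V₂) (β : V₂ →ₗ[Fq] V₃)
    (adm : AdmissibleTriple E₁ E₂ E₃ α β)
    (f : V₂ → ℂ) (hf : f ∈ Dspace E₂)
    (μ₁ : ↥(Dspace E₁) →ₗ[ℂ] ℂ) (hμ₁ : IsInvariantMeasure E₁ μ₁) :
    (∀ w' : V₂, (fun v => f (α v + w')) ∈ Dspace E₁) ∧
    (∀ (w₁ w₂ : V₂) (h₁ : (fun v => f (α v + w₁)) ∈ Dspace E₁)
       (h₂ : (fun v => f (α v + w₂)) ∈ Dspace E₁), β w₁ = β w₂ →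
       μ₁ ⟨fun v => f (α v + w₁), h₁⟩ = μ₁ ⟨fun v => f (α v + w₂), h₂⟩) ∧
    (∀ h : V₃ → ℂ,
       (∀ (w' : V₂) (hm : (fun v => f (α v + w')) ∈ Dspace E₁),
          h (β w') = μ₁ ⟨fun v => f (α v + w'), hm⟩) →
       h ∈ Dspace E₃) := by
  obtain ⟨i, j, hij, hz, hinv⟩ := hf
  obtain ⟨φ₁, hmono₁, hphi₁, -⟩ := adm.exists_phi1
  obtain ⟨φ₃, hmono₃, hphi₃, -⟩ := adm.exists_phi3
  have parta : ∀ w' : V₂, (fun v => f (α v + w')) ∈ Dspace E₁ := by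
    intro w'
    obtain ⟨j', hj'⟩ := E₂.union_eq_top w'
    obtain ⟨k, l, -, hl₁, -, hl₂⟩ := E₂.directed j j'
    refine ⟨φ₁ i, φ₁ l, hmono₁ (hij.trans hl₁), ?_, ?_⟩
    · intro v hv
      show f (α v + w') = 0
      apply hz
      intro hmem
      apply hv
      have hα : α v ∈ E₂.F l ⊓ LinearMap.range α := by
        refine ⟨?_, ⟨v, rfl⟩⟩
        have := (E₂.F l).sub_mem (E₂.mono hl₁ hmem) (E₂.mono hl₂ hj')
        simpa using this
      rw [← hphi₁ l] at hα
      obtain ⟨x, hx, hxv⟩ := hα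
      rwa [← adm.inj hxv]
    · intro w hw v
      show f (α (v + w) + w') = f (α v + w')
      have hαw : α w ∈ E₂.F i := by
        have : α w ∈ E₂.F i ⊓ LinearMap.range α := by
          rw [← hphi₁ i]; exact ⟨w, hw, rfl⟩
        exact this.1
      rw [map_add, add_right_comm]
      exact hinv (α w) hαw (α v + w')
  have partb : ∀ (w₁ w₂ : V₂) (h₁ : (fun v => f (α v + w₁)) ∈ Dspace E₁)
       (h₂ : (fun v => f (α v + w₂)) ∈ Dspace E₁), β w₁ = β w₂ →
       μ₁ ⟨fun v => f (α v + w₁), h₁⟩ = μ₁ ⟨fun v => f (α v + w₂), h₂⟩ := by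
    intro w₁ w₂ h₁ h₂ hβ
    have hker : w₁ - w₂ ∈ LinearMap.ker β := by
      simp [LinearMap.mem_ker, hβ]
    rw [← adm.exact] at hker
    obtain ⟨a, ha⟩ := hker
    have heq : (⟨fun v => f (α v + w₁), h₁⟩ : ↥(Dspace E₁)) =
        ⟨fun v => (fun u => f (α u + w₂)) (v + a), translate_mem E₁ h₂ a⟩ := by
      ext v
      show f (α v + w₁) = f (α (v + a) + w₂)
      congr 1
      rw [map_add, ha]
      abel
    rw [heq, hμ₁ a ⟨fun v => f (α v + w₂), h₂⟩]
  refine ⟨parta, partb, ?_⟩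
  intro h hh
  refine ⟨φ₃ i, φ₃ j, hmono₃ hij, ?_, ?_⟩
  · intro w hw
    obtain ⟨w', rfl⟩ := adm.surj w
    rw [hh w' (parta w')]
    have hzero : (⟨fun v => f (α v + w'), parta w'⟩ : ↥(Dspace E₁)) = 0 := by
      ext v
      show f (α v + w') = 0
      apply hz
      intro hmem
      apply hw
      rw [hphi₃ j]
      exact ⟨α v + w', hmem, by simpa using (adm.exact ▸ ⟨v, rfl⟩ : α v ∈ LinearMap.ker β)⟩
    rw [hzero, map_zero]
  · intro u hu w
    obtain ⟨w', rfl⟩ := adm.surj w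
    rw [hphi₃ i] at hu
    obtain ⟨w₀, hw₀, rfl⟩ := hu
    rw [← map_add, hh (w' + w₀) (parta _), hh w' (parta w')]
    congr 1
    ext v
    show f (α v + (w' + w₀)) = f (α v + w')
    rw [← add_assoc]
    exact hinv w₀ hw₀ (α v + w')
end

section
/- Fubini formula: let 0 → E₁ →α E₂ →β E₃ → 0 be an admissible triple of C₁-spaces over F_q, and let μ₁, μ₂, μ₃ be invariant measures on E₁, E₂, E₃ respectively such that μ₂(δ_{F₂(j)}) = μ₁(δ_{α⁻¹(F₂(j))})·μ₃(δ_{β(F₂(j))}) for every j ∈ I₂. Then for every f ∈ D(E₂): μ₃(β_*(f ⊗ μ₁)) = μ₂(f), where β_*(f ⊗ μ₁) ∈ D(E₃) is defined by β_*(f ⊗ μ₁)(w) = μ₁(v ↦ f(α(v) + w')) for any w' ∈ V₂ with β(w') = w. -/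
open scoped Classical

variable {Fq : Type} [Field Fq] {I : Type} [PartialOrder I]
  {V : Type} [AddCommGroup V] [Module Fq V]

section AdmissibleLemmas

variable {I₁ I₂ I₃ : Type} [PartialOrder I₁] [PartialOrder I₂] [PartialOrder I₃]
  {V₁ V₂ V₃ : Type} [AddCommGroup V₁] [Module Fq V₁] [AddCommGroup V₂] [Module Fq V₂]
  [AddCommGroup V₃] [Module Fq V₃]

/-- In an admissible triple, the indicator function of `α⁻¹(F₂(j))` lies in `D(E₁)`. -/
theorem comap_indicator_mem {E₁ : C1Space Fq I₁ V₁} {E₂ : C1Space Fq I₂ V₂}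
    {E₃ : C1Space Fq I₃ V₃} {α : V₁ →ₗ[Fq] V₂} {β : V₂ →ₗ[Fq] V₃}
    (adm : AdmissibleTriple E₁ E₂ E₃ α β) (j : I₂) :
    (fun v => if v ∈ Submodule.comap α (E₂.F j) then (1 : ℂ) else 0) ∈ Dspace E₁ := by
  obtain ⟨φ₁, -, heq, -⟩ := adm.exists_phi1
  have hco : Submodule.comap α (E₂.F j) = E₁.F (φ₁ j) := by
    ext v
    simp only [Submodule.mem_comap]
    constructor
    · intro hv
      have h1 : α v ∈ E₂.F j ⊓ LinearMap.range α := ⟨hv, ⟨v, rfl⟩⟩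
      rw [← heq j] at h1
      obtain ⟨u, hu, huv⟩ := h1
      rwa [← adm.inj huv]
    · intro hv
      have h2 : α v ∈ Submodule.map α (E₁.F (φ₁ j)) := ⟨v, hv, rfl⟩
      rw [heq j] at h2
      exact h2.1
  rw [hco]
  exact indicator_mem E₁ (φ₁ j)

/-- In an admissible triple, the indicator function of `β(F₂(j))` lies in `D(E₃)`. -/
theorem map_indicator_mem {E₁ : C1Space Fq I₁ V₁} {E₂ : C1Space Fq I₂ V₂}
    {E₃ : C1Space Fq I₃ V₃} {α : V₁ →ₗ[Fq] V₂} {β : V₂ →ₗ[Fq] V₃}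
    (adm : AdmissibleTriple E₁ E₂ E₃ α β) (j : I₂) :
    (fun v => if v ∈ Submodule.map β (E₂.F j) then (1 : ℂ) else 0) ∈ Dspace E₃ := by
  obtain ⟨φ₃, -, heq, -⟩ := adm.exists_phi3
  rw [← heq j]
  exact indicator_mem E₃ (φ₃ j)

end AdmissibleLemmas

/-- Fubini formula: for an admissible triple `0 → E₁ →α E₂ →β E₃ → 0` of
`C₁`-spaces over a finite field and invariant measures `μ₁, μ₂, μ₃` on `E₁, E₂, E₃` with
`μ₂(δ_{F₂(j)}) = μ₁(δ_{α⁻¹(F₂(j))}) · μ₃(δ_{β(F₂(j))})` for every `j ∈ I₂`, one has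
`μ₃(β_*(f ⊗ μ₁)) = μ₂(f)` for every `f ∈ D(E₂)`, where `β_*(f ⊗ μ₁) ∈ D(E₃)` is the
function sending `β w'` to `μ₁(v ↦ f(α v + w'))`. -/
theorem statement18 (Fq : Type) [Field Fq] [Fintype Fq]
    (I₁ I₂ I₃ : Type) [PartialOrder I₁] [PartialOrder I₂] [PartialOrder I₃]
    (V₁ V₂ V₃ : Type) [AddCommGroup V₁] [Module Fq V₁] [AddCommGroup V₂] [Module Fq V₂]
    [AddCommGroup V₃] [Module Fq V₃]
    (E₁ : C1Space Fq I₁ V₁) (E₂ : C1Space Fq I₂ V₂) (E₃ : C1Space Fq I₃ V₃)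
    (α : V₁ →ₗ[Fq] V₂) (β : V₂ →ₗ[Fq] V₃)
    (adm : AdmissibleTriple E₁ E₂ E₃ α β)
    (μ₁ : ↥(Dspace E₁) →ₗ[ℂ] ℂ) (hμ₁ : IsInvariantMeasure E₁ μ₁)
    (μ₂ : ↥(Dspace E₂) →ₗ[ℂ] ℂ) (hμ₂ : IsInvariantMeasure E₂ μ₂)
    (μ₃ : ↥(Dspace E₃) →ₗ[ℂ] ℂ) (hμ₃ : IsInvariantMeasure E₃ μ₃)
    (hcompat : ∀ j : I₂,
      μ₂ ⟨fun v => if v ∈ E₂.F j then (1 : ℂ) else 0, indicator_mem E₂ j⟩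
        = μ₁ ⟨fun v => if v ∈ Submodule.comap α (E₂.F j) then (1 : ℂ) else 0,
              comap_indicator_mem adm j⟩
          * μ₃ ⟨fun v => if v ∈ Submodule.map β (E₂.F j) then (1 : ℂ) else 0,
              map_indicator_mem adm j⟩)
    (f : V₂ → ℂ) (hf : f ∈ Dspace E₂) :
    ∀ (h : V₃ → ℂ) (hmem : h ∈ Dspace E₃),
      (∀ (w' : V₂) (hm : (fun v => f (α v + w')) ∈ Dspace E₁),
         h (β w') = μ₁ ⟨fun v => f (α v + w'), hm⟩) →
      μ₃ ⟨h, hmem⟩ = μ₂ ⟨f, hf⟩ := by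
  intro h hmem hh
  obtain ⟨i, j, hij, hsupp, hinv⟩ := id hf
  set c₁ : ℂ := μ₁ ⟨fun v => if v ∈ Submodule.comap α (E₂.F i) then (1 : ℂ) else 0,
      comap_indicator_mem adm i⟩ with hc₁
  set c₃ : ℂ := μ₃ ⟨fun v => if v ∈ Submodule.map β (E₂.F i) then (1 : ℂ) else 0,
      map_indicator_mem adm i⟩ with hc₃
  -- the quotient F₂(j)/F₂(i) is finite
  haveI := E₂.finite_quot i j hij
  haveI : Finite (↥(E₂.F j) ⧸ Submodule.comap (E₂.F j).subtype (E₂.F i)) :=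
    Module.finite_of_finite Fq
  haveI : Fintype (↥(E₂.F j) ⧸ Submodule.comap (E₂.F j).subtype (E₂.F i)) :=
    Fintype.ofFinite _
  set N : Submodule Fq ↥(E₂.F j) := Submodule.comap (E₂.F j).subtype (E₂.F i) with hNdef
  -- representatives of the cosets
  have hrepex : ∀ c : ↥(E₂.F j) ⧸ N, ∃ x : ↥(E₂.F j), Submodule.Quotient.mk x = c :=
    Submodule.Quotient.mk_surjective N
  choose repS hrepS using hrepex
  set rep : (↥(E₂.F j) ⧸ N) → V₂ := fun c => ((repS c : ↥(E₂.F j)) : V₂) with hrepdef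
  have hrepF : ∀ c, rep c ∈ E₂.F j := fun c => (repS c).2
  have hcoset : ∀ (v : V₂) (hv : v ∈ E₂.F j) (c : ↥(E₂.F j) ⧸ N),
      (v - rep c ∈ E₂.F i) ↔ c = Submodule.Quotient.mk ⟨v, hv⟩ := by
    intro v hv c
    have hmk : (c = Submodule.Quotient.mk ⟨v, hv⟩)
        ↔ (Submodule.Quotient.mk (repS c) : ↥(E₂.F j) ⧸ N) = Submodule.Quotient.mk ⟨v, hv⟩ := by
      rw [hrepS c]
    rw [hmk, Submodule.Quotient.eq]
    have hmemN : (repS c - ⟨v, hv⟩ : ↥(E₂.F j)) ∈ N ↔ rep c - v ∈ E₂.F i := by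
      simp [hNdef, Submodule.mem_comap, hrepdef]
    rw [hmemN]
    constructor
    · intro h1
      have := (E₂.F i).neg_mem h1
      rwa [neg_sub] at this
    · intro h1
      have := (E₂.F i).neg_mem h1
      rwa [neg_sub] at this
  -- decomposition of f into coset indicator functions
  have hdecomp : ∀ v : V₂,
      f v = ∑ c : ↥(E₂.F j) ⧸ N, f (rep c) * (if v - rep c ∈ E₂.F i then (1 : ℂ) else 0) := by
    intro v
    by_cases hv : v ∈ E₂.F j
    · rw [Finset.sum_eq_single (Submodule.Quotient.mk ⟨v, hv⟩ : ↥(E₂.F j) ⧸ N)]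
      · have h1 : v - rep (Submodule.Quotient.mk ⟨v, hv⟩) ∈ E₂.F i :=
          (hcoset v hv _).mpr rfl
        rw [if_pos h1, mul_one]
        have h2 := hinv (v - rep (Submodule.Quotient.mk ⟨v, hv⟩)) h1
          (rep (Submodule.Quotient.mk ⟨v, hv⟩))
        have h3 : rep (Submodule.Quotient.mk ⟨v, hv⟩)
            + (v - rep (Submodule.Quotient.mk ⟨v, hv⟩)) = v := by abel
        rw [h3] at h2
        exact h2
      · intro c _ hne
        rw [if_neg, mul_zero]
        intro hci
        exact hne ((hcoset v hv c).mp hci)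
      · intro hnm
        exact absurd (Finset.mem_univ _) hnm
    · rw [hsupp v hv]
      symm
      apply Finset.sum_eq_zero
      intro c _
      rw [if_neg, mul_zero]
      intro hci
      apply hv
      have h4 : rep c + (v - rep c) ∈ E₂.F j :=
        (E₂.F j).add_mem (hrepF c) (E₂.mono hij hci)
      have h5 : rep c + (v - rep c) = v := by abel
      rwa [h5] at h4
  -- pullbacks of single coset indicators: membership and value of μ₁
  have hpboth : ∀ a w' : V₂,
      ∃ hm : (fun v : V₁ => if α v + w' - a ∈ E₂.F i then (1 : ℂ) else 0) ∈ Dspace E₁,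
        μ₁ ⟨fun v : V₁ => if α v + w' - a ∈ E₂.F i then (1 : ℂ) else 0, hm⟩
          = if β w' - β a ∈ Submodule.map β (E₂.F i) then c₁ else 0 := by
    intro a w'
    by_cases hc : β w' - β a ∈ Submodule.map β (E₂.F i)
    · obtain ⟨u, hu, hbu⟩ := hc
      have hker : w' - a - u ∈ LinearMap.ker β := by
        simp [LinearMap.mem_ker, map_sub, hbu]
      rw [← adm.exact] at hker
      obtain ⟨v₀, hv₀⟩ := hker
      have hfun : (fun v : V₁ => if α v + w' - a ∈ E₂.F i then (1 : ℂ) else 0)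
          = fun v : V₁ => if v + v₀ ∈ Submodule.comap α (E₂.F i) then (1 : ℂ) else 0 := by
        funext v
        have he : α v + w' - a = α (v + v₀) + u := by
          rw [map_add, hv₀]; abel
        simp only [Submodule.mem_comap]
        rw [he]
        refine if_congr ?_ rfl rfl
        constructor
        · intro h1
          have := (E₂.F i).sub_mem h1 hu
          rwa [add_sub_cancel_right] at this
        · intro h1
          exact (E₂.F i).add_mem h1 hu
      have hm : (fun v : V₁ => if α v + w' - a ∈ E₂.F i then (1 : ℂ) else 0) ∈ Dspace E₁ := by
        rw [hfun]
        exact translate_mem E₁ (comap_indicator_mem adm i) v₀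
      refine ⟨hm, ?_⟩
      rw [if_pos ⟨u, hu, hbu⟩]
      have heq : (⟨fun v : V₁ => if α v + w' - a ∈ E₂.F i then (1 : ℂ) else 0, hm⟩
            : ↥(Dspace E₁))
          = ⟨fun v : V₁ => if v + v₀ ∈ Submodule.comap α (E₂.F i) then (1 : ℂ) else 0,
              translate_mem E₁ (comap_indicator_mem adm i) v₀⟩ :=
        Subtype.ext hfun
      rw [heq, hc₁]
      exact hμ₁ v₀ ⟨fun v => if v ∈ Submodule.comap α (E₂.F i) then (1 : ℂ) else 0,
        comap_indicator_mem adm i⟩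
    · have hzero : (fun v : V₁ => if α v + w' - a ∈ E₂.F i then (1 : ℂ) else 0)
          = (0 : V₁ → ℂ) := by
        funext v
        refine if_neg fun hmem' => hc ?_
        refine ⟨α v + w' - a, hmem', ?_⟩
        have hβα : β (α v) = 0 := by
          have : α v ∈ LinearMap.ker β := adm.exact ▸ LinearMap.mem_range_self α v
          exact this
        rw [map_sub, map_add, hβα, zero_add]
      have hm : (fun v : V₁ => if α v + w' - a ∈ E₂.F i then (1 : ℂ) else 0) ∈ Dspace E₁ := by
        rw [hzero]; exact (Dspace E₁).zero_mem
      refine ⟨hm, ?_⟩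
      have heq : (⟨fun v : V₁ => if α v + w' - a ∈ E₂.F i then (1 : ℂ) else 0, hm⟩
          : ↥(Dspace E₁)) = 0 := Subtype.ext hzero
      rw [heq, map_zero, if_neg hc]
  have hpmem : ∀ a w' : V₂,
      (fun v : V₁ => if α v + w' - a ∈ E₂.F i then (1 : ℂ) else 0) ∈ Dspace E₁ :=
    fun a w' => (hpboth a w').1
  have hpval : ∀ a w' : V₂,
      μ₁ ⟨fun v : V₁ => if α v + w' - a ∈ E₂.F i then (1 : ℂ) else 0, hpmem a w'⟩
        = if β w' - β a ∈ Submodule.map β (E₂.F i) then c₁ else 0 :=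
    fun a w' => (hpboth a w').2
  -- the pullback of f along (α · + w') decomposes accordingly
  have hpull : ∀ w' : V₂, (fun v : V₁ => f (α v + w'))
      = ∑ c : ↥(E₂.F j) ⧸ N, f (rep c)
          • (fun v : V₁ => if α v + w' - rep c ∈ E₂.F i then (1 : ℂ) else 0) := by
    intro w'
    funext v
    rw [Finset.sum_apply]
    simpa [smul_eq_mul] using hdecomp (α v + w')
  have hmemsum : ∀ w' : V₂, (fun v : V₁ => f (α v + w')) ∈ Dspace E₁ := by
    intro w'
    rw [hpull w']
    exact Submodule.sum_mem _ fun c _ => Submodule.smul_mem _ _ (hpmem (rep c) w')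
  -- value of h at β w'
  have hval3 : ∀ w' : V₂, h (β w') = ∑ c : ↥(E₂.F j) ⧸ N,
      f (rep c) * (if β w' - β (rep c) ∈ Submodule.map β (E₂.F i) then c₁ else 0) := by
    intro w'
    rw [hh w' (hmemsum w')]
    have heq : (⟨fun v : V₁ => f (α v + w'), hmemsum w'⟩ : ↥(Dspace E₁))
        = ∑ c : ↥(E₂.F j) ⧸ N, f (rep c)
            • (⟨fun v : V₁ => if α v + w' - rep c ∈ E₂.F i then (1 : ℂ) else 0,
                hpmem (rep c) w'⟩ : ↥(Dspace E₁)) := by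
      apply Subtype.ext
      push_cast
      exact hpull w'
    rw [heq, map_sum]
    refine Finset.sum_congr rfl fun c _ => ?_
    rw [map_smul, hpval (rep c) w', smul_eq_mul]
  -- hence h is a linear combination of translated indicators on V₃
  have hH : h = fun w : V₃ => ∑ c : ↥(E₂.F j) ⧸ N,
      f (rep c) * (if w - β (rep c) ∈ Submodule.map β (E₂.F i) then c₁ else 0) := by
    funext w
    obtain ⟨w', rfl⟩ := adm.surj w
    exact hval3 w'
  -- compute μ₃ h
  have hmemH : ∀ c : ↥(E₂.F j) ⧸ N,
      (fun w : V₃ => if w + -β (rep c) ∈ Submodule.map β (E₂.F i) then (1 : ℂ) else 0)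
        ∈ Dspace E₃ :=
    fun c => translate_mem E₃ (map_indicator_mem adm i) (-β (rep c))
  have hsplit : (⟨h, hmem⟩ : ↥(Dspace E₃)) = ∑ c : ↥(E₂.F j) ⧸ N,
      (f (rep c) * c₁)
        • (⟨fun w : V₃ => if w + -β (rep c) ∈ Submodule.map β (E₂.F i) then (1 : ℂ) else 0,
            hmemH c⟩ : ↥(Dspace E₃)) := by
    apply Subtype.ext
    push_cast
    rw [hH]
    funext w
    rw [Finset.sum_apply]
    refine Finset.sum_congr rfl fun c _ => ?_
    simp only [Pi.smul_apply, smul_eq_mul, sub_eq_add_neg]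
    by_cases hcc : w + -β (rep c) ∈ Submodule.map β (E₂.F i)
    · rw [if_pos hcc, if_pos hcc, mul_one]
    · rw [if_neg hcc, if_neg hcc, mul_zero, mul_zero]
  have hμ₃H : ∀ c : ↥(E₂.F j) ⧸ N,
      μ₃ ⟨fun w : V₃ => if w + -β (rep c) ∈ Submodule.map β (E₂.F i) then (1 : ℂ) else 0,
          hmemH c⟩ = c₃ := by
    intro c
    rw [hc₃]
    exact hμ₃ (-β (rep c)) ⟨fun w => if w ∈ Submodule.map β (E₂.F i) then (1 : ℂ) else 0,
      map_indicator_mem adm i⟩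
  -- compute μ₂ f
  have hmemg : ∀ c : ↥(E₂.F j) ⧸ N,
      (fun v : V₂ => if v + -rep c ∈ E₂.F i then (1 : ℂ) else 0) ∈ Dspace E₂ :=
    fun c => translate_mem E₂ (indicator_mem E₂ i) (-rep c)
  have hsplit2 : (⟨f, hf⟩ : ↥(Dspace E₂)) = ∑ c : ↥(E₂.F j) ⧸ N,
      f (rep c) • (⟨fun v : V₂ => if v + -rep c ∈ E₂.F i then (1 : ℂ) else 0,
          hmemg c⟩ : ↥(Dspace E₂)) := by
    apply Subtype.ext
    push_cast
    funext v
    rw [Finset.sum_apply]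
    simpa [smul_eq_mul, sub_eq_add_neg] using hdecomp v
  have hμ₂g : ∀ c : ↥(E₂.F j) ⧸ N,
      μ₂ ⟨fun v : V₂ => if v + -rep c ∈ E₂.F i then (1 : ℂ) else 0, hmemg c⟩ = c₁ * c₃ := by
    intro c
    have := hμ₂ (-rep c) ⟨fun v => if v ∈ E₂.F i then (1 : ℂ) else 0, indicator_mem E₂ i⟩
    rw [this]
    exact hcompat i
  rw [hsplit, hsplit2, map_sum, map_sum]
  refine Finset.sum_congr rfl fun c _ => ?_
  rw [map_smul, map_smul, hμ₃H c, hμ₂g c, smul_eq_mul, smul_eq_mul]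
  ring
end
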